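/- In the one-dimensional-hidden-unit RNN setting, for 0 ≤ i ≤ j ≤ T and a transformation index l : Fin T → Fin k, define F_{i:j}(h, l) : ℝ → ℝ by F_{i:i}(h, l) = h and F_{i:p+1}(h, l) = φ(w · F_{i:p}(h, l) + ⟪m, V p (l p)⟫ + b) for i ≤ p < j. Assume φ : ℝ → ℝ is non-decreasing and concave on ℝ, w > 0, and ⟪m, V p t⟫ ≥ ⟪m, V p 0⟫ for all p, t. Then for all 0 ≤ i < j ≤ T, every δ > 0, every h : ℝ, every position s with i ≤ s < j and l s = 0, and every t : Fin k, we have F_{i:j}(h + δ, l) − F_{i:j}(h, l) ≥ F_{i:j}(h + δ, l') − F_{i:j}(h, l'), where l' = Function.update l s t. -/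

import Mathlib

open scoped RealInnerProductSpace

lemma concave_shift {φ : ℝ → ℝ} (hconc : ConcaveOn ℝ Set.univ φ)
    {u v e : ℝ} (huv : u ≤ v) (he : 0 ≤ e) :
    φ (v + e) - φ v ≤ φ (u + e) - φ u := by
  rcases eq_or_lt_of_le (by linarith : (0:ℝ) ≤ v - u + e) with hD | hD
  · have h1 : e = 0 := by linarith
    have h2 : v = u := by linarith
    rw [h1, h2]
  · set D := v - u + e with hDdef
    have hDne : D ≠ 0 := ne_of_gt hD
    set a := e / D with ha
    set c := (v - u) / D with hc
    have ha0 : 0 ≤ a := div_nonneg he hD.le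
    have hc0 : 0 ≤ c := div_nonneg (by linarith) hD.le
    have hED : e + (v - u) = D := by rw [hDdef]; ring
    have hac : a + c = 1 := by rw [ha, hc, ← add_div, hED, div_self hDne]
    have hca : c + a = 1 := by linarith
    have h1 := hconc.2 (Set.mem_univ u) (Set.mem_univ (v + e)) ha0 hc0 hac
    have h2 := hconc.2 (Set.mem_univ u) (Set.mem_univ (v + e)) hc0 ha0 hca
    have e1 : a • u + c • (v + e) = v := by
      simp only [smul_eq_mul, ha, hc]; field_simp; ring
    have e2 : c • u + a • (v + e) = u + e := by
      simp only [smul_eq_mul, ha, hc]; field_simp; ring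
    rw [e1] at h1
    rw [e2] at h2
    simp only [smul_eq_mul] at h1 h2
    have key := add_le_add h1 h2
    have hEq : a * φ u + c * φ (v + e) + (c * φ u + a * φ (v + e)) =
        (a + c) * (φ u + φ (v + e)) := by ring
    rw [hEq, hac, one_mul] at key
    linarith

theorem stmt_9 (T k d : ℕ) [NeZero T] [NeZero k]
    (V : Fin T → Fin k → EuclideanSpace ℝ (Fin d))
    (m : EuclideanSpace ℝ (Fin d)) (b : ℝ) (w : ℝ) (hw : 0 < w)
    (φ : ℝ → ℝ) (hφ : Monotone φ) (hconc : ConcaveOn ℝ Set.univ φ)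
    (hV : ∀ (p : Fin T) (t : Fin k), ⟪m, V p 0⟫ ≤ ⟪m, V p t⟫)
    -- `F i j h l` : hidden state at time `j` given hidden state `h` at time `i`
    (F : ℕ → ℕ → ℝ → (Fin T → Fin k) → ℝ)
    (hFdiag : ∀ (i : ℕ) (h : ℝ) (l : Fin T → Fin k), F i i h l = h)
    (hFstep : ∀ (i : ℕ) (p : Fin T) (h : ℝ) (l : Fin T → Fin k), i ≤ (p : ℕ) →
      F i ((p : ℕ) + 1) h l = φ (w * F i p h l + ⟪m, V p (l p)⟫ + b)) :
    ∀ (i j : ℕ), i < j → j ≤ T → ∀ δ : ℝ, 0 < δ → ∀ (h : ℝ)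
      (l : Fin T → Fin k) (s : Fin T), i ≤ (s : ℕ) → (s : ℕ) < j → l s = 0 →
      ∀ t : Fin k,
        F i j (h + δ) l - F i j h l ≥
          F i j (h + δ) (Function.update l s t) - F i j h (Function.update l s t) := by
  intro i j hij hjT δ hδ h l s his hsj hls t
  set l' := Function.update l s t with hl'
  -- F agrees on l and l' up to time s
  have heq : ∀ h' : ℝ, ∀ p : ℕ, i ≤ p → p ≤ (s : ℕ) → F i p h' l = F i p h' l' := by
    intro h' p hp
    induction p, hp using Nat.le_induction with
    | base => intro _; rw [hFdiag, hFdiag]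
    | succ n hn ih =>
      intro hns
      have hns' : n < (s : ℕ) := Nat.lt_of_succ_le hns
      have hnT : n < T := lt_trans hns' s.isLt
      have hne : (⟨n, hnT⟩ : Fin T) ≠ s := Fin.ne_of_val_ne (Nat.ne_of_lt hns')
      have hupd : l' ⟨n, hnT⟩ = l ⟨n, hnT⟩ := Function.update_of_ne hne t l
      have e1 := hFstep i ⟨n, hnT⟩ h' l hn
      have e2 := hFstep i ⟨n, hnT⟩ h' l' hn
      simp only at e1 e2
      rw [e1, e2, hupd, ih hns'.le]
  -- monotonicity in h
  have hmono : ∀ (L : Fin T → Fin k) (p : ℕ), i ≤ p → p ≤ T →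
      ∀ h₁ h₂ : ℝ, h₁ ≤ h₂ → F i p h₁ L ≤ F i p h₂ L := by
    intro L p hp
    induction p, hp using Nat.le_induction with
    | base => intro _ h₁ h₂ hh; rw [hFdiag, hFdiag]; exact hh
    | succ n hn ih =>
      intro hnT h₁ h₂ hh
      have hnT' : n < T := Nat.lt_of_succ_le hnT
      have e1 := hFstep i ⟨n, hnT'⟩ h₁ L hn
      have e2 := hFstep i ⟨n, hnT'⟩ h₂ L hn
      simp only at e1 e2
      rw [e1, e2]
      have := ih hnT'.le h₁ h₂ hh
      apply hφ
      nlinarith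
  -- main induction on p from s+1 to j
  have main : ∀ p : ℕ, (s : ℕ) + 1 ≤ p → p ≤ j →
      F i p h l ≤ F i p h l' ∧
      0 ≤ F i p (h + δ) l' - F i p h l' ∧
      F i p (h + δ) l' - F i p h l' ≤ F i p (h + δ) l - F i p h l := by
    intro p hp
    induction p, hp using Nat.le_induction with
    | base =>
      intro hsj'
      have hsT : (s : ℕ) < T := s.isLt
      have hsT' : (s : ℕ) ≤ T := hsT.le
      set x := F i (s : ℕ) h l with hx
      set X := F i (s : ℕ) (h + δ) l with hX
      have hxX : x ≤ X := hmono l (s : ℕ) his hsT' h (h + δ) (by linarith)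
      have hq1 : F i (s : ℕ) h l' = x := (heq h s his le_rfl).symm
      have hq2 : F i (s : ℕ) (h + δ) l' = X := (heq (h + δ) s his le_rfl).symm
      have hls' : l' s = t := Function.update_self s t l
      have e1 := hFstep i s h l his
      have e2 := hFstep i s (h + δ) l his
      have e3 := hFstep i s h l' his
      have e4 := hFstep i s (h + δ) l' his
      rw [hls] at e1 e2
      rw [hls'] at e3 e4
      rw [hq1] at e3
      rw [hq2] at e4
      rw [← hx] at e1
      rw [← hX] at e2
      have hc : ⟪m, V s 0⟫ ≤ ⟪m, V s t⟫ := hV s t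
      refine ⟨?_, ?_, ?_⟩
      · rw [e1, e3]; apply hφ; linarith
      · rw [e3, e4]
        have : w * x + ⟪m, V s t⟫ + b ≤ w * X + ⟪m, V s t⟫ + b := by nlinarith
        have := hφ this
        linarith
      · rw [e1, e2, e3, e4]
        have key := concave_shift hconc
          (u := w * x + ⟪m, V s 0⟫ + b) (v := w * x + ⟪m, V s t⟫ + b)
          (e := w * (X - x)) (by linarith) (by nlinarith)
        have r1 : w * x + ⟪m, V s t⟫ + b + w * (X - x) = w * X + ⟪m, V s t⟫ + b := by ring
        have r2 : w * x + ⟪m, V s 0⟫ + b + w * (X - x) = w * X + ⟪m, V s 0⟫ + b := by ring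
        rw [r1, r2] at key
        linarith
    | succ n hn ih =>
      intro hnj
      have hnj' : n < j := Nat.lt_of_succ_le hnj
      have hnT : n < T := lt_of_lt_of_le hnj' hjT
      have hns : (s : ℕ) < n := Nat.lt_of_succ_le hn
      obtain ⟨h1, h2, h3⟩ := ih hnj'.le
      set x := F i n h l with hx
      set X := F i n (h + δ) l with hX
      set y := F i n h l' with hy
      set Y := F i n (h + δ) l' with hY
      have hne : (⟨n, hnT⟩ : Fin T) ≠ s := Fin.ne_of_val_ne (Nat.ne_of_gt hns)
      have hupd : l' ⟨n, hnT⟩ = l ⟨n, hnT⟩ := Function.update_of_ne hne t l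
      set c := ⟪m, V ⟨n, hnT⟩ (l ⟨n, hnT⟩)⟫ with hcdef
      have e1 := hFstep i ⟨n, hnT⟩ h l (le_trans his (le_of_lt hns))
      have e2 := hFstep i ⟨n, hnT⟩ (h + δ) l (le_trans his (le_of_lt hns))
      have e3 := hFstep i ⟨n, hnT⟩ h l' (le_trans his (le_of_lt hns))
      have e4 := hFstep i ⟨n, hnT⟩ (h + δ) l' (le_trans his (le_of_lt hns))
      simp only at e1 e2 e3 e4
      rw [hupd] at e3 e4
      rw [← hx] at e1
      rw [← hX] at e2
      rw [← hy] at e3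
      rw [← hY] at e4
      rw [← hcdef] at e1 e2 e3 e4
      refine ⟨?_, ?_, ?_⟩
      · rw [e1, e3]; apply hφ; nlinarith
      · rw [e3, e4]
        have : w * y + c + b ≤ w * Y + c + b := by nlinarith
        have := hφ this
        linarith
      · rw [e1, e2, e3, e4]
        have key := concave_shift hconc
          (u := w * x + c + b) (v := w * y + c + b)
          (e := w * (Y - y)) (by nlinarith) (by nlinarith)
        have r1 : w * y + c + b + w * (Y - y) = w * Y + c + b := by ring
        rw [r1] at key
        have key2 : φ (w * x + c + b + w * (Y - y)) ≤ φ (w * x + c + b + w * (X - x)) := by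
          apply hφ; nlinarith
        have r2 : w * x + c + b + w * (X - x) = w * X + c + b := by ring
        rw [r2] at key2
        linarith
  have hsj1 : (s : ℕ) + 1 ≤ j := hsj
  exact (main j hsj1 le_rfl).2.2
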